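/- Fix p with 0 < p < 1 and define ρ_k by ρ_0 = 1 and ρ_{k+1} = 2p·ρ_k − (p·ρ_k)². Then for every n ≥ 1, 2^{n−1}·ρ_1 ≤ Σ_{k=1}^n 2^{n−k}·ρ_k ≤ 2^{n−1}·ρ_1/(1 − p). -/
import Mathlib


open Filter Finset

/-- The recursion `ρ₀ = 1`, `ρ_{k+1} = 2 p ρ_k - (p ρ_k)²`. -/
noncomputable def rho (p : ℝ) : ℕ → ℝ
  | 0 => 1
  | k + 1 => 2 * p * rho p k - (p * rho p k) ^ 2

lemma rho_mem (p : ℝ) (hp0 : 0 < p) (hp1 : p < 1) :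
    ∀ k, 0 ≤ rho p k ∧ rho p k ≤ 1 := by
  intro k
  induction k with
  | zero => simp [rho]
  | succ k ih =>
    obtain ⟨h0, h1⟩ := ih
    constructor
    · have : p * rho p k ≤ 1 := by nlinarith
      simp only [rho]
      nlinarith [mul_nonneg hp0.le h0]
    · simp only [rho]
      nlinarith [sq_nonneg (p * rho p k - 1)]

lemma rho_succ_le (p : ℝ) (hp0 : 0 < p) (hp1 : p < 1) (k : ℕ) :
    rho p (k + 1) ≤ (2 * p) ^ k * rho p 1 := by
  induction k with
  | zero => simp
  | succ k ih =>
    have h0 := (rho_mem p hp0 hp1 (k + 1)).1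
    have h1 := (rho_mem p hp0 hp1 1).1
    have step : rho p (k + 2) ≤ 2 * p * rho p (k + 1) := by
      show 2 * p * rho p (k + 1) - (p * rho p (k + 1)) ^ 2 ≤ _
      nlinarith [sq_nonneg (p * rho p (k + 1))]
    calc rho p (k + 2) ≤ 2 * p * rho p (k + 1) := step
      _ ≤ 2 * p * ((2 * p) ^ k * rho p 1) := by
          apply mul_le_mul_of_nonneg_left ih (by linarith)
      _ = (2 * p) ^ (k + 1) * rho p 1 := by ring

/-- **Bounds on `∑_{k=1}^n 2^{n-k} ρ_k`.**  For `0 < p < 1` and `n ≥ 1`,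
`2^{n-1} ρ_1 ≤ ∑_{k=1}^n 2^{n-k} ρ_k ≤ 2^{n-1} ρ_1 / (1 - p)`. -/
theorem sum_two_pow_rho_bounds (p : ℝ) (hp0 : 0 < p) (hp1 : p < 1)
    (n : ℕ) (hn : 1 ≤ n) :
    (2 : ℝ) ^ (n - 1) * rho p 1 ≤
        ∑ k ∈ Finset.Icc 1 n, (2 : ℝ) ^ (n - k) * rho p k ∧
      ∑ k ∈ Finset.Icc 1 n, (2 : ℝ) ^ (n - k) * rho p k ≤
        (2 : ℝ) ^ (n - 1) * rho p 1 / (1 - p) := by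
  have hrho := rho_mem p hp0 hp1
  have h1p : (0 : ℝ) < 1 - p := by linarith
  constructor
  · have := Finset.single_le_sum (f := fun k => (2 : ℝ) ^ (n - k) * rho p k)
      (fun k _ => mul_nonneg (by positivity) (hrho k).1)
      (show 1 ∈ Finset.Icc 1 n by simp [hn])
    simpa using this
  · have hterm : ∀ k ∈ Finset.Icc 1 n,
        (2 : ℝ) ^ (n - k) * rho p k ≤ (2 : ℝ) ^ (n - 1) * rho p 1 * p ^ (k - 1) := by
      intro k hk
      simp only [Finset.mem_Icc] at hk
      obtain ⟨hk1, hkn⟩ := hk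
      obtain ⟨j, rfl⟩ := Nat.exists_eq_add_of_le hk1
      have hle := rho_succ_le p hp0 hp1 j
      have h2 : ((2 : ℝ) * p) ^ j = 2 ^ j * p ^ j := mul_pow 2 p j
      have hpow : (2 : ℝ) ^ (n - (1 + j)) * 2 ^ j = 2 ^ (n - 1) := by
        rw [← pow_add]; congr 1; omega
      calc (2 : ℝ) ^ (n - (1 + j)) * rho p (1 + j)
          ≤ (2 : ℝ) ^ (n - (1 + j)) * ((2 * p) ^ j * rho p 1) := by
            apply mul_le_mul_of_nonneg_left _ (by positivity)
            simpa [add_comm] using hle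
        _ = (2 : ℝ) ^ (n - (1 + j)) * 2 ^ j * p ^ j * rho p 1 := by rw [h2]; ring
        _ = (2 : ℝ) ^ (n - 1) * rho p 1 * p ^ (1 + j - 1) := by
            have hj : 1 + j - 1 = j := by omega
            rw [hj, ← hpow]; ring
    have hsum := Finset.sum_le_sum hterm
    have hgeom : ∑ k ∈ Finset.Icc 1 n, (p : ℝ) ^ (k - 1) = ∑ j ∈ Finset.range n, p ^ j := by
      rw [← Finset.Ico_add_one_right_eq_Icc, Finset.sum_Ico_eq_sum_range]
      simp
    have hgle : ∑ j ∈ Finset.range n, (p : ℝ) ^ j ≤ 1 / (1 - p) := by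
      rw [geom_sum_eq (by linarith : p ≠ 1)]
      have heq : (p ^ n - 1) / (p - 1) = (1 - p ^ n) / (1 - p) := by
        rw [div_eq_div_iff (by linarith) (by linarith)]; ring
      rw [heq, div_le_div_iff₀ h1p h1p]
      have : (0:ℝ) ≤ p ^ n := by positivity
      nlinarith
    have hr1 : (0:ℝ) ≤ (2 : ℝ) ^ (n - 1) * rho p 1 := mul_nonneg (by positivity) (hrho 1).1
    calc ∑ k ∈ Finset.Icc 1 n, (2 : ℝ) ^ (n - k) * rho p k
        ≤ ∑ k ∈ Finset.Icc 1 n, (2 : ℝ) ^ (n - 1) * rho p 1 * p ^ (k - 1) := hsum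
      _ = (2 : ℝ) ^ (n - 1) * rho p 1 * ∑ k ∈ Finset.Icc 1 n, p ^ (k - 1) := by
          rw [Finset.mul_sum]
      _ ≤ (2 : ℝ) ^ (n - 1) * rho p 1 * (1 / (1 - p)) := by
          rw [hgeom]; exact mul_le_mul_of_nonneg_left hgle hr1
      _ = (2 : ℝ) ^ (n - 1) * rho p 1 / (1 - p) := by ring
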